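/- Let μ, σ̃ : X → ℝ be functions on a nonempty finite set X with σ̃ not constant, i.e., there exist x₁, x₂ ∈ X with σ̃(x₁) ≠ σ̃(x₂). Let Z be a standard normal random variable. Then E[max over x ∈ X of (μ(x) + σ̃(x)·Z)] > max over x ∈ X of μ(x). -/

import Mathlib

open MeasureTheory ProbabilityTheory Filter Real

lemma integrable_mul_gaussianPDFReal :
    Integrable (fun x : ℝ => x * gaussianPDFReal 0 1 x) := by
  have h0 := integrable_rpow_mul_exp_neg_mul_sq (b := 1/2) (by norm_num) (s := 1) (by norm_num)
  simp only [Real.rpow_one] at h0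
  have hmaj : Integrable (fun x : ℝ => (√(2 * π))⁻¹ * |x * rexp (-(1/2) * x ^ 2)|) :=
    h0.abs.const_mul _
  refine hmaj.mono' ((measurable_id.mul (measurable_gaussianPDFReal 0 1)).aestronglyMeasurable)
    (ae_of_all _ fun x => ?_)
  have hpdf : gaussianPDFReal 0 1 x = (√(2 * π))⁻¹ * rexp (-(1/2) * x ^ 2) := by
    simp only [gaussianPDFReal, NNReal.coe_one, mul_one, sub_zero]
    ring_nf
  have hinv : (0 : ℝ) ≤ (√(2 * π))⁻¹ := by positivity
  rw [Real.norm_eq_abs, abs_mul, abs_of_nonneg (gaussianPDFReal_nonneg 0 1 x), hpdf,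
    abs_mul, abs_of_pos (Real.exp_pos _)]
  ring_nf
  exact le_refl _

lemma integrable_id_gaussianReal : Integrable (fun x : ℝ => x) (gaussianReal 0 1) := by
  rw [gaussianReal_of_var_ne_zero 0 one_ne_zero]
  rw [integrable_withDensity_iff (measurable_gaussianPDF 0 1)
    (ae_of_all _ fun _ => ENNReal.ofReal_lt_top)]
  refine integrable_mul_gaussianPDFReal.congr (ae_of_all _ fun x => ?_)
  simp [gaussianPDF, ENNReal.toReal_ofReal (gaussianPDFReal_nonneg 0 1 x)]

lemma map_neg_gaussianReal : (gaussianReal 0 1).map (fun x : ℝ => -x) = gaussianReal 0 1 := by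
  have h := gaussianReal_map_const_mul (μ := 0) (v := 1) (-1)
  have h2 : (⟨(-1 : ℝ) ^ 2, sq_nonneg _⟩ : NNReal) * 1 = 1 := by
    ext; norm_num
  simp only [neg_one_mul, neg_zero, h2] at h
  convert h using 2
  ext; norm_num

lemma integral_id_gaussianReal : ∫ x, x ∂(gaussianReal 0 1) = 0 := by
  have h1 : ∫ x, x ∂(gaussianReal 0 1) = ∫ x, -x ∂(gaussianReal 0 1) := by
    have h := integral_map (μ := gaussianReal 0 1) (φ := fun x : ℝ => -x)
      (f := fun x : ℝ => x) measurable_neg.aemeasurable aestronglyMeasurable_id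
    rw [map_neg_gaussianReal] at h
    simpa using h
  rw [integral_neg] at h1
  linarith

/-- Strict positivity of the Knowledge-Gradient Value of Information when the
update coefficients `σ̃` are not constant. -/
theorem stmt2 {Ω : Type*} [MeasureSpace Ω] [IsProbabilityMeasure (volume : Measure Ω)]
    {X : Type*} [Fintype X] [Nonempty X]
    (μf σt : X → ℝ) (x₁ x₂ : X) (hne : σt x₁ ≠ σt x₂)
    (Z : Ω → ℝ) (hZm : Measurable Z)
    (hZ : Measure.map Z volume = gaussianReal 0 1) :
    (⨆ x, μf x) < ∫ ω, ⨆ x, (μf x + σt x * Z ω) := by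
  -- Integrability and mean of Z
  have hZint : Integrable Z volume := by
    have h := (integrable_map_measure (f := Z) (g := fun x : ℝ => x)
      aestronglyMeasurable_id hZm.aemeasurable).mp
      (by rw [hZ]; exact integrable_id_gaussianReal)
    exact h
  have hZmean : ∫ ω, Z ω = 0 := by
    have h := integral_map (μ := volume) (φ := Z) (f := fun x : ℝ => x)
      hZm.aemeasurable aestronglyMeasurable_id
    rw [hZ, _root_.integral_id_gaussianReal] at h
    exact h.symm
  -- maximizer of μf
  obtain ⟨x₀, hx₀⟩ := Finite.exists_max μf
  have hA : (⨆ x, μf x) = μf x₀ :=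
    le_antisymm (ciSup_le hx₀) (le_ciSup (Set.Finite.bddAbove (Set.finite_range μf)) x₀)
  obtain ⟨y, hy⟩ : ∃ y, σt y ≠ σt x₀ := by
    by_cases h : σt x₁ = σt x₀
    · exact ⟨x₂, fun h2 => hne (h.trans h2.symm)⟩
    · exact ⟨x₁, h⟩
  set c := σt x₀ with hc
  set d := σt y with hd
  set e := d - c with hedef
  have he : e ≠ 0 := sub_ne_zero.mpr hy
  set δ := μf x₀ - μf y with hδdef
  have hδ : 0 ≤ δ := sub_nonneg.mpr (hx₀ y)
  -- the sup function and its properties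
  set G : Ω → ℝ := fun ω => ⨆ x, (μf x + σt x * Z ω) with hG
  have hGsup : ∀ ω, G ω = Finset.univ.sup' Finset.univ_nonempty
      (fun x => μf x + σt x * Z ω) := fun ω =>
    (Finset.sup'_univ_eq_ciSup _).symm
  have hbdd : ∀ ω, BddAbove (Set.range fun x => μf x + σt x * Z ω) := fun ω =>
    Set.Finite.bddAbove (Set.finite_range _)
  have hle : ∀ (x : X) (ω : Ω), μf x + σt x * Z ω ≤ G ω := fun x ω =>
    le_ciSup (hbdd ω) x
  -- measurability of G
  have hGmeas : Measurable G := by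
    have hfun : G = Finset.univ.sup' (Finset.univ_nonempty (α := X))
        (fun x (ω : Ω) => μf x + σt x * Z ω) :=
      funext fun ω => by rw [hGsup ω, Finset.sup'_apply]
    rw [hfun]
    exact Finset.measurable_sup' _ (fun x _ => by fun_prop)
  -- integrability of G
  set C : ℝ := Finset.univ.sup' Finset.univ_nonempty (fun x => |μf x|) with hC
  set D : ℝ := Finset.univ.sup' Finset.univ_nonempty (fun x => |σt x|) with hD
  have hGint : Integrable G volume := by
    have hmaj : Integrable (fun ω => C + D * |Z ω|) volume :=
      (integrable_const C).add (hZint.abs.const_mul D)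
    refine hmaj.mono' hGmeas.aestronglyMeasurable (ae_of_all _ fun ω => ?_)
    have hterm : ∀ x : X, |μf x + σt x * Z ω| ≤ C + D * |Z ω| := fun x => by
      have h1 : |μf x| ≤ C := by
        rw [hC]; exact Finset.le_sup' (fun x => |μf x|) (Finset.mem_univ x)
      have h2 : |σt x| ≤ D := by
        rw [hD]; exact Finset.le_sup' (fun x => |σt x|) (Finset.mem_univ x)
      calc |μf x + σt x * Z ω| ≤ |μf x| + |σt x| * |Z ω| := by
            rw [← abs_mul]; exact abs_add_le _ _
        _ ≤ C + D * |Z ω| := by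
            have := abs_nonneg (Z ω)
            gcongr
    rw [Real.norm_eq_abs, abs_le]
    constructor
    · have h := hle x₀ ω
      have h2 := (abs_le.mp (hterm x₀)).1
      linarith
    · rw [hGsup ω]
      exact Finset.sup'_le _ _ fun x _ => (abs_le.mp (hterm x)).2
  -- lower bound function
  set H : Ω → ℝ := fun ω => max (e * Z ω - δ) 0 with hH
  have hHint : Integrable H volume := ((hZint.const_mul e).sub (integrable_const δ)).pos_part
  have hLint : Integrable (fun ω => μf x₀ + c * Z ω + H ω) volume :=
    ((integrable_const (μf x₀)).add (hZint.const_mul c)).add hHint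
  have hpt : ∀ ω, μf x₀ + c * Z ω + H ω ≤ G ω := by
    intro ω
    rcases max_cases (e * Z ω - δ) 0 with ⟨heq, hge⟩ | ⟨heq, hlt⟩
    · have hrw : μf x₀ + c * Z ω + H ω = μf y + σt y * Z ω := by
        simp only [hH]
        rw [heq, hedef, hδdef, hd, hc]
        ring
      rw [hrw]; exact hle y ω
    · have hrw : μf x₀ + c * Z ω + H ω = μf x₀ + σt x₀ * Z ω := by
        simp only [hH]
        rw [heq, hc]
        ring
      rw [hrw]; exact hle x₀ ω
  -- positivity of ∫ H
  have hHpos : 0 < ∫ ω, H ω := by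
    refine (integral_pos_iff_support_of_nonneg (fun ω => le_max_right _ _) hHint).mpr ?_
    set s : Set ℝ := {z | δ < e * z} with hs
    have hsmeas : MeasurableSet s := measurableSet_lt measurable_const (by fun_prop)
    have hsopen : IsOpen s := isOpen_lt continuous_const (by continuity)
    have hsne : s.Nonempty := by
      refine ⟨(δ + 1) / e, ?_⟩
      simp only [hs, Set.mem_setOf_eq, mul_div_cancel₀ _ he]
      linarith
    have hsub : Z ⁻¹' s ⊆ Function.support H := by
      intro ω hω
      have h1 : 0 < e * Z ω - δ := sub_pos.mpr hω
      simp only [Function.mem_support, hH]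
      exact (lt_max_iff.mpr (Or.inl h1)).ne'
    have hvolpre : volume (Z ⁻¹' s) = gaussianReal 0 1 s := by
      rw [← hZ, Measure.map_apply hZm hsmeas]
    have hgpos : 0 < gaussianReal 0 1 s := by
      rw [pos_iff_ne_zero]
      intro h0
      have hv0 := gaussianReal_absolutelyContinuous' 0 one_ne_zero h0
      exact absurd hv0 (hsopen.measure_pos volume hsne).ne'
    calc (0 : ENNReal) < gaussianReal 0 1 s := hgpos
      _ = volume (Z ⁻¹' s) := hvolpre.symm
      _ ≤ volume (Function.support H) := measure_mono hsub
  -- conclude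
  have hmono : ∫ ω, (μf x₀ + c * Z ω + H ω) ≤ ∫ ω, G ω :=
    integral_mono hLint hGint hpt
  have hconst : Integrable (fun _ : Ω => μf x₀) volume := integrable_const _
  have hcz : Integrable (fun ω : Ω => c * Z ω) volume := hZint.const_mul c
  have hcz2 : Integrable (fun ω : Ω => μf x₀ + c * Z ω) volume := hconst.add hcz
  have hcalc : ∫ ω, (μf x₀ + c * Z ω + H ω) = μf x₀ + ∫ ω, H ω := by
    rw [integral_add hcz2 hHint, integral_add hconst hcz,
      integral_const, integral_const_mul, hZmean]
    simp
  rw [hA]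
  calc μf x₀ < μf x₀ + ∫ ω, H ω := by linarith
    _ = ∫ ω, (μf x₀ + c * Z ω + H ω) := hcalc.symm
    _ ≤ ∫ ω, G ω := hmono
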